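/- Let f : A → A be a continuous map and let K ⊆ A be an inessential continuum (i.e., K is contained in some connected, simply connected open subset of A) with f(K) ⊆ K. Then there exist a lift F : Ã → Ã of f and a nonempty compact connected set C ⊆ π⁻¹(K) with F(C) ⊆ C. -/

import Mathlib

open Set Filter Topology

noncomputable section

/-- The open annulus `A = S¹ × (0,1)`. -/
abbrev Ann : Type := Circle × (Set.Ioo (0:ℝ) 1)

/-- The universal cover `Ã = ℝ × (0,1)`. -/
abbrev AnnTil : Type := ℝ × (Set.Ioo (0:ℝ) 1)

/-- The covering projection `π(x,y) = (exp(2πix), y)`. -/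
def pr : AnnTil → Ann := fun z => (Circle.exp (2 * Real.pi * z.1), z.2)

/-- Translation by an integer in the first coordinate: `z + k`. -/
def tr (z : AnnTil) (k : ℤ) : AnnTil := (z.1 + k, z.2)

/-- `F` is a lift of `f`. -/
def IsLift (f : Ann → Ann) (F : AnnTil → AnnTil) : Prop :=
  Continuous F ∧ pr ∘ F = f ∘ pr

/-- `f` has degree `d`: some lift satisfies `F(z+1) = F(z) + d`. -/
def HasDegree (f : Ann → Ann) (d : ℤ) : Prop :=
  ∃ F : AnnTil → AnnTil, IsLift f F ∧ ∀ z, F (tr z 1) = tr (F z) d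

/-- A subset of the annulus is essential if it is not contained in any
connected, simply connected open subset. -/
def IsEssential (K : Set Ann) : Prop :=
  ¬ ∃ U : Set Ann, IsOpen U ∧ IsConnected U ∧ SimplyConnectedSpace U ∧ K ⊆ U

/-- Nielsen equivalence of fixed points `p`, `q` of `g`: there is a path `γ`
from `p` to `q` homotopic (rel endpoints) to `g ∘ γ`. -/
def NielsenEquiv (g : Ann → Ann) (p q : Ann) : Prop :=
  ∃ (hg : Continuous g) (hp : g p = p) (hq : g q = q) (γ : Path p q),
    γ.Homotopic ((γ.map hg).cast hp.symm hq.symm)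

/-- `g` has exactly `N` Nielsen classes of fixed points. -/
def HasExactlyNielsenClasses (g : Ann → Ann) (N : ℕ) : Prop :=
  ∃ S : Finset Ann, S.card = N ∧ (∀ p ∈ S, g p = p) ∧
    (∀ p ∈ S, ∀ q ∈ S, p ≠ q → ¬ NielsenEquiv g p q) ∧
    (∀ p, g p = p → ∃ q ∈ S, NielsenEquiv g p q)

/-- `Fill K`: the union of `K` with the connected components of its
complement whose closure is compact. -/
def Fill (K : Set Ann) : Set Ann :=
  K ∪ {x | x ∈ Kᶜ ∧ IsCompact (closure (connectedComponentIn Kᶜ x))}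


-- ## Auxiliary machinery


/-- The exponential `t ↦ exp(2πit)` as a map `ℝ → Circle`. -/
def ee (t : ℝ) : Circle := Circle.exp (2 * Real.pi * t)

lemma ee_continuous : Continuous ee :=
  Circle.exp.continuous.comp (continuous_const.mul continuous_id)

lemma ee_add (s t : ℝ) : ee (s + t) = ee s * ee t := by
  simp [ee, mul_add, Circle.exp_add]

lemma ee_zero : ee 0 = 1 := by simp [ee, Circle.exp_zero]

lemma ee_sub (s t : ℝ) : ee (s - t) = ee s * (ee t)⁻¹ := by
  have h : ee (s - t) * ee t = ee s := by rw [← ee_add]; ring_nf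
  rw [← h]; group

lemma ee_eq_one {t : ℝ} : ee t = 1 ↔ ∃ n : ℤ, t = n := by
  rw [ee, Circle.exp_eq_one]
  have hπ : (2 * Real.pi) ≠ 0 := by positivity
  constructor
  · rintro ⟨n, hn⟩
    refine ⟨n, ?_⟩
    have hπ2 : (0:ℝ) < 2 * Real.pi := by positivity
    have : 2 * Real.pi * t = 2 * Real.pi * n := by rw [hn]; ring
    exact mul_left_cancel₀ (by positivity) this
  · rintro ⟨n, hn⟩; exact ⟨n, by rw [hn]; ring⟩

/-- The branch of `(2πi)⁻¹ log` on the circle. -/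
def ph (w : Circle) : ℝ := Complex.arg w / (2 * Real.pi)

lemma ee_ph (w : Circle) : ee (ph w) = w := by
  have hπ : (2 * Real.pi) ≠ 0 := by positivity
  rw [ee, ph, mul_div_cancel₀ _ hπ, Circle.exp_arg]

lemma ph_one : ph 1 = 0 := by
  simp [ph, Complex.arg_one]

lemma abs_ph_le (w : Circle) : |ph w| ≤ 1 / 2 := by
  have h1 := Complex.arg_le_pi (w : ℂ)
  have h2 := Complex.neg_pi_lt_arg (w : ℂ)
  have hπ : (0:ℝ) < 2 * Real.pi := by positivity
  rw [ph, abs_div, abs_of_pos hπ, div_le_iff₀ hπ]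
  have : |(w:ℂ).arg| ≤ Real.pi := abs_le.mpr ⟨by linarith, h1⟩
  nlinarith [Real.pi_pos]

lemma ph_continuousAt {w : Circle} (h : (w : ℂ) ≠ -1) : ContinuousAt ph w := by
  have habs : ‖(w : ℂ)‖ = 1 := Circle.norm_coe w
  have hsl : (w : ℂ) ∈ Complex.slitPlane := by
    rw [Complex.mem_slitPlane_iff]
    by_contra hc
    push_neg at hc
    obtain ⟨h1, h2⟩ := hc
    apply h
    have : (w:ℂ).re = -1 := by
      have := Complex.sq_norm (w : ℂ)
      rw [habs, Complex.normSq_apply, h2] at this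
      nlinarith
    apply Complex.ext <;> simp [this, h2]
  exact ((Complex.continuousAt_arg hsl).comp continuous_subtype_val.continuousAt).div_const _

lemma arg_small {w : Circle} (h : ‖(w : ℂ) - 1‖ < 1) :
    |Complex.arg (w : ℂ)| < Real.pi / 2 := by
  have habs : ‖(w : ℂ)‖ = 1 := Circle.norm_coe w
  rw [Complex.abs_arg_lt_pi_div_two_iff]
  left
  have h2 := Complex.sq_norm ((w:ℂ) - 1)
  have h3 := Complex.sq_norm (w:ℂ)
  rw [habs] at h3
  rw [Complex.normSq_sub] at h2
  have : ‖(w:ℂ) - 1‖ ^ 2 < 1 := by nlinarith [norm_nonneg ((w:ℂ)-1)]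
  rw [h2] at this
  have hre : ((w:ℂ) * (starRingEnd ℂ) 1).re = (w:ℂ).re := by simp
  rw [hre] at this
  simp [Complex.normSq_apply] at this h3
  nlinarith [this]

lemma ee_int (n : ℤ) : ee n = 1 := ee_eq_one.mpr ⟨n, rfl⟩

lemma ph_mul {a b : Circle} (ha : |Complex.arg (a:ℂ)| < Real.pi / 2)
    (hb : |Complex.arg (b:ℂ)| < Real.pi / 2) : ph (a * b) = ph a + ph b := by
  have hππ : (0:ℝ) < Real.pi := Real.pi_pos
  have h0a : (a:ℂ) ≠ 0 := Circle.coe_ne_zero a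
  have h0b : (b:ℂ) ≠ 0 := Circle.coe_ne_zero b
  have habs := abs_lt.mp ha
  have hbabs := abs_lt.mp hb
  have hmem : Complex.arg (a:ℂ) + Complex.arg (b:ℂ) ∈ Set.Ioc (-Real.pi) Real.pi := by
    constructor <;> [nlinarith; nlinarith]
  have harg : ((a:ℂ) * (b:ℂ)).arg = (a:ℂ).arg + (b:ℂ).arg := Complex.arg_mul h0a h0b hmem
  have hc : ((a * b : Circle) : ℂ) = (a:ℂ) * (b:ℂ) := rfl
  rw [ph, ph, ph, hc, harg, add_div]

/-- ratio distance on the circle -/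
lemma ratio_dist (a b : Circle) :
    ‖((a * b⁻¹ : Circle) : ℂ) - 1‖ = ‖(a:ℂ) - (b:ℂ)‖ := by
  have hb : ‖(b:ℂ)‖ = 1 := Circle.norm_coe b
  have hc : ((a * b⁻¹ : Circle) : ℂ) = (a:ℂ) * (b:ℂ)⁻¹ := by
    push_cast; ring
  have h0b : (b:ℂ) ≠ 0 := Circle.coe_ne_zero b
  rw [hc]
  have : (a:ℂ) * (b:ℂ)⁻¹ - 1 = ((a:ℂ) - (b:ℂ)) * (b:ℂ)⁻¹ := by field_simp
  rw [this, norm_mul, norm_inv, hb]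
  simp

/-- A continuous function with values in `ℤ` (detected by `ee ∘ = 1`) is constant
on a preconnected set. -/
lemma intlift_const {X : Type*} [TopologicalSpace X] {s : Set X} (hs : IsPreconnected s)
    {d : X → ℝ} (hd : ContinuousOn d s) (h : ∀ x ∈ s, ee (d x) = 1)
    {a b : X} (ha : a ∈ s) (hb : b ∈ s) : d a = d b := by
  by_contra hne
  obtain ⟨na, hna⟩ := ee_eq_one.mp (h a ha)
  obtain ⟨nb, hnb⟩ := ee_eq_one.mp (h b hb)
  -- wlog d a < d b
  rcases lt_or_gt_of_ne hne with hlt | hlt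
  · have h1 : d a + 1/2 ∈ Icc (d a) (d b) := by
      constructor
      · linarith
      · have : (na:ℝ) < nb := by rw [← hna, ← hnb]; exact hlt
        have : na < nb := by exact_mod_cast this
        have : (na:ℝ) + 1 ≤ nb := by exact_mod_cast this
        rw [hna, hnb]; linarith
    obtain ⟨c, hc, hceq⟩ := hs.intermediate_value ha hb hd h1
    obtain ⟨n, hn⟩ := ee_eq_one.mp (h c hc)
    rw [hn, hna] at hceq
    have : (2*na+1 : ℝ) = 2*n := by linarith
    have : 2*na+1 = 2*n := by exact_mod_cast this
    omega
  · have h1 : d b + 1/2 ∈ Icc (d b) (d a) := by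
      constructor
      · linarith
      · have : (nb:ℝ) < na := by rw [← hna, ← hnb]; exact hlt
        have : nb < na := by exact_mod_cast this
        have : (nb:ℝ) + 1 ≤ na := by exact_mod_cast this
        rw [hna, hnb]; linarith
    obtain ⟨c, hc, hceq⟩ := hs.intermediate_value hb ha hd h1
    obtain ⟨n, hn⟩ := ee_eq_one.mp (h c hc)
    rw [hn, hnb] at hceq
    have : (2*nb+1 : ℝ) = 2*n := by linarith
    have : 2*nb+1 = 2*n := by exact_mod_cast this
    omega

section LiftMachinery

variable {Y : Type*} [TopologicalSpace Y]

lemma ee_sum (f : ℕ → ℝ) (n : ℕ) :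
    ee (∑ i ∈ Finset.range n, f i) = ∏ i ∈ Finset.range n, ee (f i) := by
  induction n with
  | zero => simp [ee_zero]
  | succ n ih => rw [Finset.sum_range_succ, Finset.prod_range_succ, ee_add, ih]

lemma prod_telescope (A : ℕ → Circle) (n : ℕ) :
    ∏ i ∈ Finset.range n, (A (i+1) * (A i)⁻¹) = A n * (A 0)⁻¹ := by
  induction n with
  | zero => simp
  | succ n ih =>
    rw [Finset.prod_range_succ, ih, mul_comm]
    group

lemma sum_grid (F : ℕ → ℝ) (k : ℕ) (n : ℕ) :
    ∑ j ∈ Finset.range (n*k), F j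
      = ∑ i ∈ Finset.range n, ∑ j ∈ Finset.range k, F (i*k+j) := by
  induction n with
  | zero => simp
  | succ n ih => rw [Nat.succ_mul, Finset.sum_range_add, ih, Finset.sum_range_succ]

/-- The `n`-step polygonal lift value. -/
def Gn (u : ℝ → Y → Circle) (n : ℕ) (y : Y) : ℝ :=
  ph (u 0 y) +
    ∑ i ∈ Finset.range n, ph (u (((i:ℝ)+1)/(n:ℝ)) y * (u ((i:ℝ)/(n:ℝ)) y)⁻¹)

/-- Fineness of the subdivision `n` at the point `y`. -/
def Fine (u : ℝ → Y → Circle) (n : ℕ) (y : Y) : Prop :=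
  ∀ s ∈ Icc (0:ℝ) 1, ∀ t ∈ Icc (0:ℝ) 1, |s - t| ≤ 1/(n:ℝ) →
    ‖(u t y : ℂ) - (u s y : ℂ)‖ < 1

lemma ee_Gn (u : ℝ → Y → Circle) {n : ℕ} (hn : 1 ≤ n) (y : Y) :
    ee (Gn u n y) = u 1 y := by
  have hn0 : (n:ℝ) ≠ 0 := Nat.cast_ne_zero.mpr (by omega)
  rw [Gn, ee_add, ee_sum]
  have hterm : ∀ i : ℕ,
      ee (ph (u (((i:ℝ)+1)/(n:ℝ)) y * (u ((i:ℝ)/(n:ℝ)) y)⁻¹))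
        = (fun j : ℕ => u ((j:ℝ)/(n:ℝ)) y) (i+1) * ((fun j : ℕ => u ((j:ℝ)/(n:ℝ)) y) i)⁻¹ := by
    intro i
    rw [ee_ph]
    push_cast
    ring_nf
  rw [Finset.prod_congr rfl (fun i _ => hterm i),
    prod_telescope (fun j : ℕ => u ((j:ℝ)/(n:ℝ)) y) n, ee_ph]
  have h1 : ((n:ℝ))/(n:ℝ) = 1 := div_self hn0
  have h0 : ((0:ℕ):ℝ)/(n:ℝ) = 0 := by simp
  rw [h1, h0]
  have : u 0 y * (u 1 y * (u 0 y)⁻¹) = u 1 y := by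
    rw [mul_comm (u 1 y)]; group
  rw [this]

lemma Gn_refine (u : ℝ → Y → Circle) {n k : ℕ} (hn : 1 ≤ n) (hk : 1 ≤ k) {y : Y}
    (h : Fine u n y) : Gn u (n*k) y = Gn u n y := by
  have hn0 : (0:ℝ) < (n:ℝ) := by exact_mod_cast hn
  have hk0 : (0:ℝ) < (k:ℝ) := by exact_mod_cast hk
  have hnk0 : (0:ℝ) < ((n*k : ℕ):ℝ) := by push_cast; positivity
  rw [Gn, Gn]
  congr 1
  rw [sum_grid]
  refine Finset.sum_congr rfl (fun i hi => ?_)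
  have hi' : i < n := Finset.mem_range.mp hi
  -- points of the fine subdivision within the i-th coarse block
  set b : ℕ → ℝ := fun j => ((i*k+j : ℕ):ℝ)/((n*k:ℕ):ℝ) with hb
  have hbmem : ∀ j ≤ k, b j ∈ Icc (0:ℝ) 1 := by
    intro j hj
    constructor
    · positivity
    · rw [div_le_one hnk0]
      have c1 : (i:ℝ)+1 ≤ (n:ℝ) := by exact_mod_cast hi'
      have c2 : (j:ℝ) ≤ (k:ℝ) := by exact_mod_cast hj
      push_cast
      nlinarith
  have hbdist : ∀ j j', j ≤ k → j' ≤ k → |b j - b j'| ≤ 1/(n:ℝ) := by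
    intro j j' hj hj'
    have : b j - b j' = ((j:ℝ) - (j':ℝ))/((n*k:ℕ):ℝ) := by
      rw [hb]; push_cast; field_simp; try ring
    rw [this, abs_div, abs_of_pos hnk0, div_le_div_iff₀ hnk0 hn0]
    have c1 : (j':ℝ) ≤ (k:ℝ) := by exact_mod_cast hj'
    have c2 : (j:ℝ) ≤ (k:ℝ) := by exact_mod_cast hj
    have c3 : (0:ℝ) ≤ (j:ℝ) := Nat.cast_nonneg j
    have c4 : (0:ℝ) ≤ (j':ℝ) := Nat.cast_nonneg j'
    push_cast
    have h1 : |(j:ℝ) - (j':ℝ)| ≤ (k:ℝ) := by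
      rw [abs_le]; constructor <;> nlinarith
    nlinarith
  -- the ratio from b j' to b j is small
  have hratio : ∀ j j', j ≤ k → j' ≤ k →
      ‖((u (b j) y * (u (b j') y)⁻¹ : Circle) : ℂ) - 1‖ < 1 := by
    intro j j' hj hj'
    rw [ratio_dist]
    exact h (b j') (hbmem j' hj') (b j) (hbmem j hj) (by rw [abs_sub_comm]; exact hbdist j j' hj hj')
  -- induction over the block
  have key : ∀ j ≤ k,
      ∑ l ∈ Finset.range j, ph (u (((((i*k+l):ℕ):ℝ)+1)/(((n*k):ℕ):ℝ)) y * (u ((((i*k+l):ℕ):ℝ)/(((n*k):ℕ):ℝ)) y)⁻¹)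
        = ph (u (b j) y * (u (b 0) y)⁻¹) := by
    intro j
    induction j with
    | zero => intro _; simp [ph_one]
    | succ j ih =>
      intro hj
      have hj' : j ≤ k := by omega
      rw [Finset.sum_range_succ, ih hj']
      have hcast : ((((i*k+j):ℕ):ℝ)+1)/(((n*k):ℕ):ℝ) = b (j+1) := by
        rw [hb]; push_cast; try ring
      have hcast2 : ((((i*k+j):ℕ):ℝ))/(((n*k):ℕ):ℝ) = b j := by
        rw [hb]
      rw [hcast, hcast2]
      have hmul := ph_mul (a := u (b j) y * (u (b 0) y)⁻¹) (b := u (b (j+1)) y * (u (b j) y)⁻¹)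
        (arg_small (hratio j 0 hj' (by omega))) (arg_small (hratio (j+1) j hj hj'))
      rw [← hmul]
      congr 1
      rw [mul_comm]
      group
  have hk' := key k le_rfl
  -- rewrite the LHS block sum and evaluate endpoints
  have hbk : b k = ((i:ℝ)+1)/(n:ℝ) := by
    rw [hb]; push_cast; rw [div_eq_div_iff (by positivity) hn0.ne']; ring
  have hb0 : b 0 = (i:ℝ)/(n:ℝ) := by
    rw [hb]; push_cast; rw [div_eq_div_iff (by positivity) hn0.ne']; ring
  rw [← hbk, ← hb0, ← hk']


lemma fine_nbhd (u : ℝ → Y → Circle)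
    (hu : Continuous fun p : ℝ × Y => ((u p.1 p.2 : Circle) : ℂ)) (y0 : Y) :
    ∃ n : ℕ, 1 ≤ n ∧ ∃ V : Set Y, IsOpen V ∧ y0 ∈ V ∧ ∀ y ∈ V, Fine u n y := by
  set w : ℝ × Y → ℂ := fun p => ((u p.1 p.2 : Circle) : ℂ) with hw
  have key : ∀ t : ℝ, ∃ ε : ℝ, 0 < ε ∧ ∃ V : Set Y, IsOpen V ∧ y0 ∈ V ∧
      ∀ s ∈ Metric.ball t ε, ∀ y ∈ V, dist (w (s,y)) (w (t,y0)) < 1/2 := by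
    intro t
    have hW : IsOpen {p : ℝ × Y | dist (w p) (w (t,y0)) < 1/2} :=
      isOpen_lt (hu.dist continuous_const) continuous_const
    have hmem : (t, y0) ∈ {p : ℝ × Y | dist (w p) (w (t,y0)) < 1/2} := by
      simp
    obtain ⟨A, B, hA, hB, htA, hyB, hAB⟩ := isOpen_prod_iff.mp hW t y0 hmem
    obtain ⟨ε, hε, hball⟩ := Metric.isOpen_iff.mp hA t htA
    exact ⟨ε, hε, B, hB, hyB, fun s hs y hy => hAB (Set.mk_mem_prod (hball hs) hy)⟩
  choose εf hεf Vf hVo hVy hVf using key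
  have hcov : ∀ t ∈ Icc (0:ℝ) 1, Metric.ball t (εf t / 2) ∈ 𝓝 t := by
    intro t _
    exact Metric.ball_mem_nhds t (by linarith [hεf t])
  obtain ⟨T, hTmem, hTcov⟩ := isCompact_Icc.elim_nhds_subcover (fun t => Metric.ball t (εf t / 2)) hcov
  have hTne : T.Nonempty := by
    by_contra hT
    rw [Finset.not_nonempty_iff_eq_empty] at hT
    have h0 : (0:ℝ) ∈ Icc (0:ℝ) 1 := by constructor <;> norm_num
    have := hTcov h0
    simp [hT] at this
  set δ := T.inf' hTne (fun t => εf t / 2) with hδ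
  have hδ0 : 0 < δ := by
    rw [hδ, Finset.lt_inf'_iff]
    intro t _
    linarith [hεf t]
  obtain ⟨n, hn⟩ := exists_nat_gt (1/δ)
  have hn1 : 1 ≤ n := by
    by_contra hc
    push_neg at hc
    interval_cases n
    simp at hn
    nlinarith [hδ0, hn]
  have hninv : 1/(n:ℝ) < δ := by
    rw [div_lt_iff₀ (by exact_mod_cast hn1 : (0:ℝ) < (n:ℝ))]
    rw [div_lt_iff₀ hδ0] at hn
    nlinarith
  refine ⟨n, hn1, ⋂ t ∈ T, Vf t, isOpen_biInter_finset (fun t _ => hVo t), ?_, ?_⟩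
  · exact Set.mem_biInter (fun t _ => hVy t)
  · intro y hy s hs t' ht' hst
    obtain ⟨t, htT, hsU⟩ := Set.mem_iUnion₂.mp (hTcov hs)
    have hyV : y ∈ Vf t := Set.mem_iInter₂.mp hy t htT
    have hsd : dist s t < εf t / 2 := Metric.mem_ball.mp hsU
    have ht'd : dist t' t < εf t := by
      have h1 : dist t' s ≤ 1/(n:ℝ) := by
        rw [Real.dist_eq, abs_sub_comm]; exact hst
      calc dist t' t ≤ dist t' s + dist s t := dist_triangle _ _ _
        _ < 1/(n:ℝ) + εf t / 2 := by linarith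
        _ ≤ δ + εf t / 2 := by linarith [hninv]
        _ ≤ εf t := by
            have : δ ≤ εf t / 2 := Finset.inf'_le _ htT
            linarith
    have h1 := hVf t s (Metric.mem_ball.mpr (by linarith [hεf t] : dist s t < εf t)) y hyV
    have h2 := hVf t t' (Metric.mem_ball.mpr ht'd) y hyV
    have : dist (w (t', y)) (w (s, y)) < 1 := by
      calc dist (w (t',y)) (w (s,y)) ≤ dist (w (t',y)) (w (t,y0)) + dist (w (t,y0)) (w (s,y)) :=
            dist_triangle _ _ _
        _ < 1/2 + 1/2 := by rw [dist_comm (w (t,y0))]; exact add_lt_add h2 h1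
        _ = 1 := by norm_num
    rw [← Complex.dist_eq]
    exact this

theorem lift_exists (c : ℝ → Y → Y)
    (hc : Continuous fun p : ℝ × Y => c p.1 p.2) (y₀ : Y)
    (hc0 : ∀ y, c 0 y = y₀) (hc1 : ∀ y, c 1 y = y)
    (g : Y → Circle) (hg : Continuous g) :
    ∃ G : Y → ℝ, Continuous G ∧ ∀ y, ee (G y) = g y := by
  classical
  set u : ℝ → Y → Circle := fun t y => g (c t y) with hu
  have hucont : Continuous fun p : ℝ × Y => ((u p.1 p.2 : Circle) : ℂ) :=
    continuous_subtype_val.comp (hg.comp hc)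
  have hex : ∀ y, ∃ n, 1 ≤ n ∧ Fine u n y := by
    intro y
    obtain ⟨n, hn1, V, _, hyV, hVf⟩ := fine_nbhd u hucont y
    exact ⟨n, hn1, hVf y hyV⟩
  set N : Y → ℕ := fun y => Nat.find (hex y) with hN
  have hNspec : ∀ y, 1 ≤ N y ∧ Fine u (N y) y := fun y => Nat.find_spec (hex y)
  refine ⟨fun y => Gn u (N y) y, ?_, ?_⟩
  · rw [continuous_iff_continuousAt]
    intro y0
    obtain ⟨n, hn1, V, hVo, hVy, hVf⟩ := fine_nbhd u hucont y0
    have hagree : ∀ y ∈ V, Gn u (N y) y = Gn u n y := by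
      intro y hy
      have h1 : Gn u (n * N y) y = Gn u n y := Gn_refine u hn1 (hNspec y).1 (hVf y hy)
      have h2 : Gn u (N y * n) y = Gn u (N y) y := Gn_refine u (hNspec y).1 hn1 (hNspec y).2
      rw [mul_comm] at h2
      rw [← h2, h1]
    -- continuity of Gn u n on V
    have hterm : ∀ i : ℕ, Continuous fun y => u (((i:ℝ)+1)/(n:ℝ)) y * (u ((i:ℝ)/(n:ℝ)) y)⁻¹ := by
      intro i
      have haux : ∀ t : ℝ, Continuous fun y => u t y := by
        intro t
        exact hg.comp (hc.comp (continuous_const.prodMk continuous_id))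
      exact (haux _).mul (haux _).inv
    have hGnAt : ContinuousAt (Gn u n) y0 := by
      have hhead : ContinuousAt (fun y : Y => ph (u 0 y)) y0 := by
        have heq : (fun y : Y => ph (u 0 y)) = fun _ => ph (g y₀) := by
          funext y; rw [hu]; simp [hc0]
        rw [heq]; exact continuousAt_const
      have hsum : ContinuousAt (fun y => ∑ i ∈ Finset.range n,
          ph (u (((i:ℝ)+1)/(n:ℝ)) y * (u ((i:ℝ)/(n:ℝ)) y)⁻¹)) y0 := by
        apply tendsto_finset_sum
        intro i hi
        have hi' : i < n := Finset.mem_range.mp hi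
        have hn0 : (0:ℝ) < (n:ℝ) := by exact_mod_cast hn1
        have hratio : ‖
            (((u (((i:ℝ)+1)/(n:ℝ)) y0 * (u ((i:ℝ)/(n:ℝ)) y0)⁻¹ : Circle)) : ℂ) - 1‖ < 1 := by
          rw [ratio_dist]
          apply hVf y0 hVy ((i:ℝ)/(n:ℝ)) ?_ (((i:ℝ)+1)/(n:ℝ)) ?_ ?_
          · constructor
            · positivity
            · rw [div_le_one hn0]
              have : (i:ℝ)+1 ≤ (n:ℝ) := by exact_mod_cast hi'
              linarith
          · constructor
            · positivity
            · rw [div_le_one hn0]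
              exact_mod_cast hi'
          · have heq : ((i:ℝ)+1)/(n:ℝ) - (i:ℝ)/(n:ℝ) = 1/(n:ℝ) := by field_simp; ring
            rw [abs_sub_comm, heq, abs_of_pos (by positivity)]
        have hne : ((u (((i:ℝ)+1)/(n:ℝ)) y0 * (u ((i:ℝ)/(n:ℝ)) y0)⁻¹ : Circle) : ℂ) ≠ -1 := by
          intro hc'
          rw [hc'] at hratio
          norm_num at hratio
        show ContinuousAt (fun y => ph (u (((i:ℝ)+1)/(n:ℝ)) y * (u ((i:ℝ)/(n:ℝ)) y)⁻¹)) y0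
        exact ContinuousAt.comp (x := y0)
          (f := fun y => u (((i:ℝ)+1)/(n:ℝ)) y * (u ((i:ℝ)/(n:ℝ)) y)⁻¹)
          (g := ph) (ph_continuousAt hne) ((hterm i).continuousAt)
      exact hhead.add hsum
    exact hGnAt.congr (Filter.eventuallyEq_of_mem (hVo.mem_nhds hVy)
      (fun y hy => (hagree y hy))).symm
  · intro y
    rw [ee_Gn u (hNspec y).1 y, hu]
    simp [hc1]

end LiftMachinery

section Contractions

/-- clamp to `[0,1]` -/
def clamp (t : ℝ) : ℝ := max 0 (min 1 t)

lemma clamp_continuous : Continuous clamp :=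
  continuous_const.max (continuous_const.min continuous_id)

lemma clamp_zero : clamp 0 = 0 := by norm_num [clamp]
lemma clamp_one : clamp 1 = 1 := by norm_num [clamp]
lemma clamp_mem (t : ℝ) : clamp t ∈ Icc (0:ℝ) 1 := by
  constructor
  · exact le_max_left _ _
  · rw [clamp, max_le_iff]
    constructor
    · norm_num
    · exact min_le_left _ _
lemma clamp_of_mem {t : ℝ} (h : t ∈ Icc (0:ℝ) 1) : clamp t = t := by
  rw [clamp, min_eq_right h.2, max_eq_right h.1]

/-- Lifting for maps `ℝ → Circle`. -/
lemma lift_exists_real (q : ℝ → Circle) (hq : Continuous q) :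
    ∃ G : ℝ → ℝ, Continuous G ∧ ∀ x, ee (G x) = q x := by
  apply lift_exists (fun t x => clamp t * x) ?_ 0 ?_ ?_ q hq
  · exact (clamp_continuous.comp continuous_fst).mul continuous_snd
  · intro y; simp [clamp_zero]
  · intro y; simp [clamp_one]

/-- Lifting for maps `ℝ × ℝ → Circle`. -/
lemma lift_exists_plane (q : ℝ × ℝ → Circle) (hq : Continuous q) :
    ∃ G : ℝ × ℝ → ℝ, Continuous G ∧ ∀ x, ee (G x) = q x := by
  apply lift_exists (fun t x => (clamp t * x.1, clamp t * x.2)) ?_ (0,0) ?_ ?_ q hq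
  · apply Continuous.prodMk
    · exact (clamp_continuous.comp continuous_fst).mul (continuous_fst.comp continuous_snd)
    · exact (clamp_continuous.comp continuous_fst).mul (continuous_snd.comp continuous_snd)
  · intro y; simp [clamp_zero]
  · intro y; simp [clamp_one]

lemma lerp_mem_Ioo {l h a b τ : ℝ} (ha : a ∈ Ioo l h) (hb : b ∈ Ioo l h)
    (hτ : τ ∈ Icc (0:ℝ) 1) : a + τ * (b - a) ∈ Ioo l h := by
  obtain ⟨ha1, ha2⟩ := ha
  obtain ⟨hb1, hb2⟩ := hb
  obtain ⟨hτ1, hτ2⟩ := hτ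
  constructor
  · have h2 : 0 < min (a - l) (b - l) := lt_min (by linarith) (by linarith)
    nlinarith [mul_le_mul_of_nonneg_left (min_le_left (a-l) (b-l)) (show (0:ℝ) ≤ 1-τ by linarith),
      mul_le_mul_of_nonneg_left (min_le_right (a-l) (b-l)) hτ1]
  · have h2 : 0 < min (h - a) (h - b) := lt_min (by linarith) (by linarith)
    nlinarith [mul_le_mul_of_nonneg_left (min_le_left (h-a) (h-b)) (show (0:ℝ) ≤ 1-τ by linarith),
      mul_le_mul_of_nonneg_left (min_le_right (h-a) (h-b)) hτ1]

/-- Lifting for maps `AnnTil → Circle`. -/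
lemma lift_exists_annTil (q : AnnTil → Circle) (hq : Continuous q) :
    ∃ G : AnnTil → ℝ, Continuous G ∧ ∀ x, ee (G x) = q x := by
  have hmem : ∀ (t : ℝ) (y : AnnTil), (1:ℝ)/2 + clamp t * (y.2.1 - 1/2) ∈ Ioo (0:ℝ) 1 := by
    intro t y
    exact lerp_mem_Ioo (by norm_num) y.2.2 (clamp_mem t)
  apply lift_exists (fun t y => (clamp t * y.1, ⟨1/2 + clamp t * (y.2.1 - 1/2), hmem t y⟩))
    ?_ (0, ⟨1/2, by norm_num⟩) ?_ ?_ q hq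
  · apply Continuous.prodMk
    · exact (clamp_continuous.comp continuous_fst).mul (continuous_fst.comp continuous_snd)
    · apply Continuous.subtype_mk
      exact continuous_const.add ((clamp_continuous.comp continuous_fst).mul
        (((continuous_subtype_val.comp (continuous_snd.comp continuous_snd))).sub continuous_const))
  · intro y; simp [clamp_zero]
  · intro y
    simp only [clamp_one]
    ext
    · simp
    · simp

lemma pr_continuous : Continuous pr := by
  unfold pr
  exact (Circle.exp.continuous.comp (continuous_const.mul continuous_fst)).prodMk continuous_snd

lemma pr_fst (z : AnnTil) : (pr z).1 = ee z.1 := rfl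
lemma pr_snd (z : AnnTil) : (pr z).2 = z.2 := rfl

/-- Every continuous self-map of the annulus admits a lift. -/
lemma exists_isLift (f : Ann → Ann) (hf : Continuous f) :
    ∃ F : AnnTil → AnnTil, IsLift f F := by
  obtain ⟨G, hGc, hGe⟩ := lift_exists_annTil (fun z => (f (pr z)).1)
    (continuous_fst.comp (hf.comp pr_continuous))
  refine ⟨fun z => (G z, (f (pr z)).2), ⟨hGc.prodMk
    (continuous_snd.comp (hf.comp pr_continuous)), ?_⟩⟩
  funext z
  apply Prod.ext
  · exact hGe z
  · rfl

/-- Uniqueness of winding from lifts on `[0,1]`. -/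
lemma wind_unique (q : ℝ → Circle) (G G' : ℝ → ℝ) (hG : Continuous G) (hG' : Continuous G')
    (h : ∀ x ∈ Icc (0:ℝ) 1, ee (G x) = q x) (h' : ∀ x ∈ Icc (0:ℝ) 1, ee (G' x) = q x) :
    G 1 - G 0 = G' 1 - G' 0 := by
  set d : ℝ → ℝ := fun x => G (clamp x) - G' (clamp x) with hd
  have hdc : Continuous d := (hG.comp clamp_continuous).sub (hG'.comp clamp_continuous)
  have hone : ∀ x, ee (d x) = 1 := by
    intro x
    rw [hd]
    simp only
    rw [ee_sub, h _ (clamp_mem x), h' _ (clamp_mem x)]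
    group
  have hconst := intlift_const isPreconnected_univ hdc.continuousOn
    (fun x _ => hone x) (mem_univ (0:ℝ)) (mem_univ (1:ℝ))
  rw [hd] at hconst
  simp only [clamp_zero, clamp_one] at hconst
  linarith

def projIcc01 : ℝ → unitInterval := Set.projIcc (0:ℝ) 1 zero_le_one

lemma projIcc01_continuous : Continuous projIcc01 := continuous_projIcc

lemma projIcc01_zero : projIcc01 0 = 0 := by
  apply Subtype.ext
  simp [projIcc01, Set.projIcc]

lemma projIcc01_one : projIcc01 1 = 1 := by
  apply Subtype.ext
  simp [projIcc01, Set.projIcc]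

lemma projIcc01_of_mem {x : ℝ} (h : x ∈ Icc (0:ℝ) 1) : (projIcc01 x : ℝ) = x := by
  simp [projIcc01, Set.projIcc, h.1, h.2, max_eq_right, min_eq_right]

/-- Homotopic paths in a subspace of the annulus have the same angular winding. -/
lemma wind_homotopy_invariant {U : Set Ann} {a b : ↥U} {γ γ' : Path a b}
    (hH : γ.Homotopic γ') {G G' : ℝ → ℝ} (hG : Continuous G) (hG' : Continuous G')
    (h : ∀ x ∈ Icc (0:ℝ) 1, ee (G x) = ((γ (projIcc01 x) : Ann)).1)
    (h' : ∀ x ∈ Icc (0:ℝ) 1, ee (G' x) = ((γ' (projIcc01 x) : Ann)).1) :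
    G 1 - G 0 = G' 1 - G' 0 := by
  obtain ⟨H⟩ := hH
  set Λ : ℝ × ℝ → Circle := fun p => ((H (projIcc01 p.1, projIcc01 p.2) : Ann)).1 with hΛ
  have hΛc : Continuous Λ := by
    apply continuous_fst.comp
    apply continuous_subtype_val.comp
    exact H.continuous.comp ((projIcc01_continuous.comp continuous_fst).prodMk
      (projIcc01_continuous.comp continuous_snd))
  obtain ⟨L, hLc, hLe⟩ := lift_exists_plane Λ hΛc
  -- bottom and top edges are lifts of γ and γ'
  have hbot : ∀ x ∈ Icc (0:ℝ) 1, ee (L (0, x)) = ((γ (projIcc01 x) : Ann)).1 := by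
    intro x hx
    rw [hLe (0, x), hΛ]
    simp only [projIcc01_zero]
    rw [H.apply_zero]
    rfl
  have htop : ∀ x ∈ Icc (0:ℝ) 1, ee (L (1, x)) = ((γ' (projIcc01 x) : Ann)).1 := by
    intro x hx
    rw [hLe (1, x), hΛ]
    simp only [projIcc01_one]
    rw [H.apply_one]
    rfl
  have hG1 : G 1 - G 0 = L (0,1) - L (0,0) :=
    wind_unique _ G (fun x => L (0, x)) hG
      (hLc.comp (continuous_const.prodMk continuous_id)) h hbot
  have hG2 : G' 1 - G' 0 = L (1,1) - L (1,0) :=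
    wind_unique _ G' (fun x => L (1, x)) hG'
      (hLc.comp (continuous_const.prodMk continuous_id)) h' htop
  -- the vertical edges are constant
  have hedge : ∀ xv : ℝ, xv = 0 ∨ xv = 1 → L (1, xv) = L (0, xv) := by
    intro xv hxv
    have hc : ∀ s : ℝ, Λ (s, xv) = Λ (0, xv) := by
      intro s
      rw [hΛ]
      simp only
      have h01 : (projIcc01 xv : unitInterval) ∈ ({0, 1} : Set unitInterval) := by
        rcases hxv with h | h <;> subst h
        · left; exact projIcc01_zero
        · right; exact projIcc01_one
      rw [H.eq_fst _ h01, H.eq_fst _ h01]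
    have hd : Continuous fun s : ℝ => L (s, xv) - L (0, xv) :=
      (hLc.comp (continuous_id.prodMk continuous_const)).sub continuous_const
    have hone : ∀ s : ℝ, ee (L (s, xv) - L (0, xv)) = 1 := by
      intro s
      rw [ee_sub, hLe, hLe, hc s]
      group
    have := intlift_const isPreconnected_univ hd.continuousOn (fun s _ => hone s)
      (mem_univ (1:ℝ)) (mem_univ (0:ℝ))
    simp at this
    linarith
  rw [hG1, hG2, hedge 0 (Or.inl rfl), hedge 1 (Or.inr rfl)]

end Contractions

section SectionExists

lemma ee_isOpenMap : IsOpenMap ee := by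
  have h1 : IsOpenMap (Circle.exp : ℝ → Circle) := isLocalHomeomorph_circleExp.isOpenMap
  have h2 : IsOpenMap (fun t : ℝ => 2 * Real.pi * t) :=
    (Homeomorph.mulLeft₀ (2 * Real.pi) (by positivity)).isOpenMap
  exact h1.comp h2

lemma pr_isOpenMap : IsOpenMap pr := by
  have : pr = Prod.map ee id := rfl
  rw [this]
  exact ee_isOpenMap.prodMap IsOpenMap.id

/-- Over an open simply connected subset of the annulus, the angular coordinate
admits a continuous lift. -/
theorem section_exists {U : Set Ann} (hUo : IsOpen U) (hsc : SimplyConnectedSpace U)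
    (hne : U.Nonempty) :
    ∃ θ : Ann → ℝ, ContinuousOn θ U ∧ ∀ a ∈ U, ee (θ a) = a.1 := by
  classical
  haveI := hsc
  set b₀ : ↥U := ⟨hne.some, hne.some_mem⟩ with hb₀
  set ang : ↥U → Circle := fun v => ((v : Ann)).1 with hang
  set p : ∀ u : ↥U, Path b₀ u := fun u => PathConnectedSpace.somePath b₀ u with hp
  have hqcont : ∀ u : ↥U, Continuous (fun x : ℝ => ang ((p u) (projIcc01 x))) := fun u =>
    continuous_fst.comp (continuous_subtype_val.comp
      ((p u).continuous.comp projIcc01_continuous))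
  have hLex : ∀ u : ↥U, ∃ G : ℝ → ℝ, Continuous G ∧
      ∀ x, ee (G x) = ang ((p u) (projIcc01 x)) :=
    fun u => lift_exists_real _ (hqcont u)
  choose Lf hLc hLe using hLex
  set θs : ↥U → ℝ := fun u => ph (ang b₀) + (Lf u 1 - Lf u 0) with hθs
  have hLf1 : ∀ u : ↥U, ee (Lf u 1) = ang u := by
    intro u
    rw [hLe u 1, projIcc01_one, Path.target]
  have hLf0 : ∀ u : ↥U, ee (Lf u 0) = ang b₀ := by
    intro u
    rw [hLe u 0, projIcc01_zero, Path.source]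
  have hθs_ee : ∀ u : ↥U, ee (θs u) = ang u := by
    intro u
    rw [hθs]
    simp only
    rw [ee_add, ee_sub, ee_ph, hLf1, hLf0, mul_comm]
    group
  -- key local statement
  have hkey : ∀ u : ↥U, ∃ V : Set Ann, IsOpen V ∧ ↑u ∈ V ∧ ∃ hVU : V ⊆ U,
      ∀ a, ∀ ha : a ∈ V, θs ⟨a, hVU ha⟩ = θs u + ph (a.1 * ((u : Ann)).1⁻¹) := by
    intro u
    set z : AnnTil := (ph (ang u), (u : Ann).2) with hz
    have hprz : pr z = (u : Ann) := by
      apply Prod.ext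
      · exact ee_ph (ang u)
      · rfl
    have hzU : z ∈ pr ⁻¹' U := by rw [mem_preimage, hprz]; exact u.2
    obtain ⟨A, B, hA, hB, hzA, hzB, hAB⟩ :=
      isOpen_prod_iff.mp (hUo.preimage pr_continuous) z.1 z.2 hzU
    obtain ⟨ε₁, hε₁, hball⟩ := Metric.isOpen_iff.mp hA z.1 hzA
    set ε := min ε₁ (1/4) with hε
    have hε0 : 0 < ε := lt_min hε₁ (by norm_num)
    have hε14 : ε ≤ 1/4 := min_le_right _ _
    have hεε₁ : ε ≤ ε₁ := min_le_left _ _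
    obtain ⟨B', hB', hBeq⟩ := isOpen_induced_iff.mp hB
    have hzB' : ((z.2 : Ioo (0:ℝ) 1) : ℝ) ∈ B' := by rw [← hBeq] at hzB; exact hzB
    obtain ⟨r₁, hr₁, hballB⟩ := Metric.isOpen_iff.mp hB' _ hzB'
    have hz2 := (z.2 : Ioo (0:ℝ) 1).2
    set r := min r₁ (min ((z.2 : Ioo (0:ℝ) 1) : ℝ) (1 - ((z.2 : Ioo (0:ℝ) 1) : ℝ)) / 2) with hr
    have hr0 : 0 < r := by
      apply lt_min hr₁
      have h1 := hz2.1
      have h2 := hz2.2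
      apply div_pos (lt_min (by linarith) (by linarith)) two_pos
    have hrr₁ : r ≤ r₁ := min_le_left _ _
    have hrz : r ≤ min ((z.2 : Ioo (0:ℝ) 1) : ℝ) (1 - ((z.2 : Ioo (0:ℝ) 1) : ℝ)) / 2 :=
      min_le_right _ _
    set z2 : ℝ := ((z.2 : Ioo (0:ℝ) 1) : ℝ) with hz2def
    set box : Set AnnTil :=
      (Ioo (z.1 - ε) (z.1 + ε)) ×ˢ (Subtype.val ⁻¹' Ioo (z2 - r) (z2 + r)) with hbox
    have hboxopen : IsOpen box :=
      isOpen_Ioo.prod (isOpen_Ioo.preimage continuous_subtype_val)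
    have hzbox : z ∈ box := by
      refine ⟨⟨by linarith, by linarith⟩, ?_⟩
      show z2 ∈ Ioo (z2 - r) (z2 + r)
      exact ⟨by linarith, by linarith⟩
    have hboxU : box ⊆ pr ⁻¹' U := by
      rintro w ⟨hw1, hw2⟩
      apply hAB
      constructor
      · apply hball
        rw [Metric.mem_ball, Real.dist_eq, abs_lt]
        obtain ⟨hl, hh⟩ := hw1
        constructor <;> linarith
      · show w.2 ∈ B
        rw [← hBeq]
        apply hballB
        rw [Metric.mem_ball, Real.dist_eq, abs_lt]
        obtain ⟨hl, hh⟩ := hw2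
        constructor <;> linarith
    have hIooCD : Ioo (z2 - r) (z2 + r) ⊆ Ioo (0:ℝ) 1 := by
      intro x hx
      obtain ⟨hl, hh⟩ := hx
      have h1 := hz2.1
      have h2 := hz2.2
      have h3 : min z2 (1 - z2) ≤ z2 := min_le_left _ _
      have h4 : min z2 (1 - z2) ≤ 1 - z2 := min_le_right _ _
      constructor <;> [nlinarith [lt_min (show (0:ℝ) < z2 by linarith) (show (0:ℝ) < 1 - z2 by linarith)];
        nlinarith [lt_min (show (0:ℝ) < z2 by linarith) (show (0:ℝ) < 1 - z2 by linarith)]]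
    refine ⟨pr '' box, pr_isOpenMap box hboxopen, ⟨z, hzbox, hprz⟩,
      fun a ha => (image_subset_iff.mpr hboxU) ha, ?_⟩
    intro a ha
    obtain ⟨z', hz'box, hz'a⟩ := ha
    obtain ⟨hz'1, hz'2⟩ := hz'box
    have hz'2' : ((z'.2 : Ioo (0:ℝ) 1) : ℝ) ∈ Ioo (z2 - r) (z2 + r) := hz'2
    set z'2 : ℝ := ((z'.2 : Ioo (0:ℝ) 1) : ℝ) with hz'2def
    -- the straight path from z to z' in the box, projected down
    have hmem2 : ∀ t : ℝ, z2 + clamp t * (z'2 - z2) ∈ Ioo (z2 - r) (z2 + r) := fun t =>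
      lerp_mem_Ioo ⟨by linarith, by linarith⟩ hz'2' (clamp_mem t)
    set Wf : ℝ → AnnTil := fun t =>
      (z.1 + clamp t * (z'.1 - z.1), ⟨z2 + clamp t * (z'2 - z2), hIooCD (hmem2 t)⟩) with hWf
    have hWbox : ∀ t : ℝ, Wf t ∈ box := fun t =>
      ⟨lerp_mem_Ioo ⟨by linarith, by linarith⟩ hz'1 (clamp_mem t), hmem2 t⟩
    have hWcont : Continuous Wf := by
      apply Continuous.prodMk
      · exact continuous_const.add (clamp_continuous.mul continuous_const)
      · exact (continuous_const.add (clamp_continuous.mul continuous_const)).subtype_mk _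
    have hW0 : Wf 0 = z := by
      rw [hWf]
      simp only [clamp_zero, zero_mul, add_zero]
      rfl
    have hW1 : Wf 1 = z' := by
      rw [hWf]
      simp only [clamp_one, one_mul]
      apply Prod.ext
      · show z.1 + (z'.1 - z.1) = z'.1
        ring
      · apply Subtype.ext
        show z2 + (z'2 - z2) = z'2
        ring
    set aU : ↥U := ⟨a, (image_subset_iff.mpr hboxU) ⟨z', ⟨hz'1, hz'2⟩, hz'a⟩⟩ with haU
    set δ : Path u aU :=
      { toFun := fun t => ⟨pr (Wf (t : ℝ)), hboxU (hWbox (t : ℝ))⟩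
        continuous_toFun := by
          apply Continuous.subtype_mk
          exact pr_continuous.comp (hWcont.comp continuous_subtype_val)
        source' := by
          apply Subtype.ext
          show pr (Wf ((0 : unitInterval) : ℝ)) = (u : Ann)
          rw [show ((0 : unitInterval) : ℝ) = (0:ℝ) from rfl, hW0, hprz]
        target' := by
          apply Subtype.ext
          show pr (Wf ((1 : unitInterval) : ℝ)) = a
          rw [show ((1 : unitInterval) : ℝ) = (1:ℝ) from rfl, hW1, hz'a] } with hδ
    have hhom : (p aU).Homotopic ((p u).trans δ) :=
      (simply_connected_iff_paths_homotopic'.mp hsc).2 _ _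
    -- explicit lift of the angle along the concatenated path
    set HL : ℝ → ℝ := fun x =>
      if x ≤ 1/2 then Lf u (2*x) else (z.1 + (2*x - 1)*(z'.1 - z.1)) + (Lf u 1 - z.1) with hHL
    have hHLc : Continuous HL := by
      apply Continuous.if_le
      · exact (hLc u).comp (continuous_const.mul continuous_id)
      · exact (continuous_const.add ((((continuous_const.mul continuous_id).sub
          continuous_const)).mul continuous_const)).add continuous_const
      · exact continuous_id
      · exact continuous_const
      · intro x hx
        subst hx
        norm_num
    have hangδ : ∀ t : unitInterval, ang (δ t) = ee (z.1 + clamp (t:ℝ) * (z'.1 - z.1)) := by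
      intro t
      rfl
    have hHLlift : ∀ x ∈ Icc (0:ℝ) 1,
        ee (HL x) = ang (((p u).trans δ) (projIcc01 x)) := by
      intro x hx
      have hx' : ((projIcc01 x : unitInterval) : ℝ) = x := projIcc01_of_mem hx
      rw [Path.trans_apply]
      simp only [hx', hHL]
      by_cases h : x ≤ 1/2
      · rw [dif_pos h, if_pos h, hLe u (2*x)]
        congr 2
        apply Subtype.ext
        rw [projIcc01_of_mem ⟨by linarith [hx.1], by linarith⟩]
      · rw [dif_neg h, if_neg h]
        rw [hangδ]
        have hcl : clamp (2*x - 1) = 2*x - 1 :=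
          clamp_of_mem ⟨by linarith [not_le.mp h], by linarith [hx.2]⟩
        rw [show (((⟨2*x - 1, _⟩ : unitInterval)) : ℝ) = 2*x - 1 from rfl, hcl]
        rw [ee_add, ee_sub, hLf1]
        have hez : ee z.1 = ang u := ee_ph (ang u)
        rw [hez]
        group
    -- apply homotopy invariance
    have hwind := wind_homotopy_invariant hhom (hLc aU) hHLc
      (fun x _ => hLe aU x) hHLlift
    have hHL1 : HL 1 = z'.1 + (Lf u 1 - z.1) := by
      rw [hHL]; norm_num
    have hHL0 : HL 0 = Lf u 0 := by
      rw [hHL]; norm_num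
    have hθsa : θs aU = θs u + (z'.1 - z.1) := by
      rw [hθs]
      simp only
      rw [hwind, hHL1, hHL0]
      ring
    -- identify z'.1 - z.1 with ph of the ratio
    have hee' : ee (z'.1 - z.1) = a.1 * ((u : Ann)).1⁻¹ := by
      rw [ee_sub]
      have h1 : ee z'.1 = a.1 := by rw [← hz'a]; rfl
      have h2 : ee z.1 = ((u : Ann)).1 := ee_ph (ang u)
      rw [h1, h2]
    have hdiff : ∃ m : ℤ, ph (a.1 * ((u : Ann)).1⁻¹) - (z'.1 - z.1) = m := by
      apply ee_eq_one.mp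
      rw [ee_sub, ee_ph, hee']
      group
    obtain ⟨m, hm⟩ := hdiff
    have hb1 : |ph (a.1 * ((u : Ann)).1⁻¹)| ≤ 1/2 := abs_ph_le _
    have hb2 : |z'.1 - z.1| < 1/4 := by
      obtain ⟨hl, hh⟩ := hz'1
      rw [abs_lt]
      constructor <;> linarith
    have hm0 : m = 0 := by
      have habs : |(m:ℝ)| < 1 := by
        rw [← hm]
        calc |ph (a.1 * ((u : Ann)).1⁻¹) - (z'.1 - z.1)|
            ≤ |ph (a.1 * ((u : Ann)).1⁻¹)| + |z'.1 - z.1| := abs_sub _ _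
          _ < 1 := by linarith
      have h1 := abs_lt.mp habs
      have h2 : -1 < m := by exact_mod_cast h1.1
      have h3 : m < 1 := by exact_mod_cast h1.2
      omega
    rw [hm0] at hm
    push_cast at hm
    rw [show θs ⟨a, _⟩ = θs aU from rfl, hθsa]
    linarith
  -- assemble θ from θs
  refine ⟨fun a => if h : a ∈ U then θs ⟨a, h⟩ else 0, ?_, ?_⟩
  · intro a ha
    apply ContinuousAt.continuousWithinAt
    obtain ⟨V, hVopen, hmemV, hVU, hloc⟩ := hkey ⟨a, ha⟩
    have hne1 : ((a.1 * a.1⁻¹ : Circle) : ℂ) ≠ -1 := by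
      rw [mul_inv_cancel]
      intro hcon
      rw [show ((1 : Circle) : ℂ) = 1 from rfl] at hcon
      norm_num at hcon
    have hψ : ContinuousAt (fun x : Ann => θs ⟨a, ha⟩ + ph (x.1 * a.1⁻¹)) a := by
      apply ContinuousAt.add continuousAt_const
      exact ContinuousAt.comp (x := a) (g := ph)
        (f := fun x : Ann => x.1 * a.1⁻¹) (ph_continuousAt hne1)
        ((continuous_fst.mul continuous_const).continuousAt)
    apply hψ.congr
    apply Filter.eventuallyEq_of_mem (hVopen.mem_nhds hmemV)
    intro x hx
    show θs ⟨a, ha⟩ + ph (x.1 * a.1⁻¹) = (if h : x ∈ U then θs ⟨x, h⟩ else 0)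
    rw [dif_pos (hVU hx)]
    exact (hloc x hx).symm
  · intro a ha
    show ee (if h : a ∈ U then θs ⟨a, h⟩ else 0) = a.1
    rw [dif_pos ha]
    exact hθs_ee ⟨a, ha⟩

end SectionExists



/-- If a continuous annulus map preserves an inessential continuum `K`, then
some lift preserves a nonempty compact connected subset of `π⁻¹(K)`. -/
theorem stmt_10 (f : Ann → Ann) (hf : Continuous f)
    (K : Set Ann) (hKc : IsCompact K) (hKconn : IsConnected K)
    (hKiness : ∃ U : Set Ann, IsOpen U ∧ IsConnected U ∧
      SimplyConnectedSpace U ∧ K ⊆ U)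
    (hKinv : f '' K ⊆ K) :
    ∃ F : AnnTil → AnnTil, IsLift f F ∧
      ∃ C : Set AnnTil, C.Nonempty ∧ IsCompact C ∧ IsConnected C ∧
        C ⊆ pr ⁻¹' K ∧ F '' C ⊆ C := by
  obtain ⟨U, hUo, hUconn, hUsc, hKU⟩ := hKiness
  have hKne : K.Nonempty := hKconn.nonempty
  have hUne : U.Nonempty := hKne.mono hKU
  obtain ⟨θ, hθc, hθe⟩ := section_exists hUo hUsc hUne
  set sA : Ann → AnnTil := fun a => (θ a, a.2) with hsA
  have hsAc : ContinuousOn sA U := hθc.prodMk continuous_snd.continuousOn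
  have hprs : ∀ a ∈ U, pr (sA a) = a := by
    intro a ha
    apply Prod.ext
    · exact hθe a ha
    · rfl
  obtain ⟨F₀, hF₀c, hF₀l⟩ := exists_isLift f hf
  set C : Set AnnTil := sA '' K with hC
  have hCne : C.Nonempty := hKne.image _
  have hCc : IsCompact C := hKc.image_of_continuousOn (hsAc.mono hKU)
  have hCconn : IsConnected C := hKconn.image _ (hsAc.mono hKU)
  have hCK : C ⊆ pr ⁻¹' K := by
    rintro _ ⟨a, haK, rfl⟩
    rw [mem_preimage, hprs a (hKU haK)]
    exact haK
  have hFK : ∀ ζ ∈ C, pr (F₀ ζ) ∈ K := by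
    intro ζ hζ
    have h1 : pr (F₀ ζ) = f (pr ζ) := congrFun hF₀l ζ
    rw [h1]
    exact hKinv ⟨pr ζ, hCK hζ, rfl⟩
  set d : AnnTil → ℝ := fun ζ => (F₀ ζ).1 - θ (pr (F₀ ζ)) with hd
  have hdc : ContinuousOn d C := by
    apply ContinuousOn.sub
    · exact (continuous_fst.comp hF₀c).continuousOn
    · exact ContinuousOn.comp hθc ((pr_continuous.comp hF₀c).continuousOn)
        (fun ζ hζ => hKU (hFK ζ hζ))
  have hdint : ∀ ζ ∈ C, ee (d ζ) = 1 := by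
    intro ζ hζ
    rw [hd]
    simp only
    rw [ee_sub, hθe _ (hKU (hFK ζ hζ)), show ee ((F₀ ζ).1) = (pr (F₀ ζ)).1 from rfl]
    group
  have hCne2 := hCne
  obtain ⟨ζ₀, hζ₀⟩ := hCne2
  obtain ⟨m, hmval⟩ := ee_eq_one.mp (hdint ζ₀ hζ₀)
  have hdconst : ∀ ζ ∈ C, d ζ = m := by
    intro ζ hζ
    rw [← hmval]
    exact intlift_const hCconn.isPreconnected hdc hdint hζ hζ₀
  refine ⟨fun ζ => ((F₀ ζ).1 - (m:ℝ), (F₀ ζ).2), ⟨?_, ?_⟩, C, hCne, hCc, hCconn, hCK, ?_⟩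
  · exact ((continuous_fst.comp hF₀c).sub continuous_const).prodMk (continuous_snd.comp hF₀c)
  · funext ζ
    have h1 : pr (F₀ ζ) = f (pr ζ) := congrFun hF₀l ζ
    show pr ((F₀ ζ).1 - (m:ℝ), (F₀ ζ).2) = f (pr ζ)
    rw [← h1]
    apply Prod.ext
    · show ee ((F₀ ζ).1 - (m:ℝ)) = (pr (F₀ ζ)).1
      rw [ee_sub, ee_int, show ee ((F₀ ζ).1) = (pr (F₀ ζ)).1 from rfl]
      group
    · rfl
  · rintro _ ⟨ζ, hζ, rfl⟩
    show ((F₀ ζ).1 - (m:ℝ), (F₀ ζ).2) ∈ C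
    have haK : pr (F₀ ζ) ∈ K := hFK ζ hζ
    have heq : sA (pr (F₀ ζ)) = ((F₀ ζ).1 - (m:ℝ), (F₀ ζ).2) := by
      rw [hsA]
      apply Prod.ext
      · show θ (pr (F₀ ζ)) = (F₀ ζ).1 - (m:ℝ)
        have h2 := hdconst ζ hζ
        rw [hd] at h2
        simp only at h2
        linarith
      · rfl
    rw [← heq]
    exact ⟨pr (F₀ ζ), haK, rfl⟩
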